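/- The Lovász theta SDP of the graph G₆ has more than one optimal solution: there exists a primal feasible matrix X′ with ∑_{i=1}^6 X′_{ii} = √5 and X′ ≠ X*, where X* is the explicit optimal solution. (Consequently, the canonical non-contextuality inequality of G₆ does not admit self-testing, even though its quantum bound √5 strictly exceeds its non-contextual bound 2.) -/

import Mathlib

set_option maxHeartbeats 1000000

def g6Adj (i j : ℕ) : Prop :=
  (i, j) ∈ [(1, 3), (1, 4), (1, 6), (2, 4), (2, 5), (2, 6), (3, 5), (4, 6)] ∨
    (j, i) ∈ [(1, 3), (1, 4), (1, 6), (2, 4), (2, 5), (2, 6), (3, 5), (4, 6)]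

def g6PrimalFeasible (X : Matrix (Fin 7) (Fin 7) ℝ) : Prop :=
  X.PosSemidef ∧ X 0 0 = 1 ∧
    (∀ i : Fin 7, i.val ≠ 0 → X i i = X 0 i) ∧
    (∀ i j : Fin 7, i.val ≠ 0 → j.val ≠ 0 → g6Adj i.val j.val → X i j = 0)

noncomputable def g6Xstar : Matrix (Fin 7) (Fin 7) ℝ :=
  let f : ℝ := 1 / Real.sqrt 5
  let h : ℝ := 1 / (2 * Real.sqrt 5)
  let k : ℝ := (5 - Real.sqrt 5) / 10
  let r : ℝ := (5 - Real.sqrt 5) / 20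
  !![1, f, f, f, h, f, h;
     f, f, k, 0, 0, k, 0;
     f, k, f, k, 0, 0, 0;
     f, 0, k, f, r, 0, r;
     h, 0, 0, r, h, r, 0;
     f, k, 0, 0, r, f, r;
     h, 0, 0, r, 0, r, h]

noncomputable def g6Xalt : Matrix (Fin 7) (Fin 7) ℝ :=
  let f : ℝ := Real.sqrt 5 / 5
  let k : ℝ := (5 - Real.sqrt 5) / 10
  !![1, f, f, f, f, f, 0;
     f, f, k, 0, 0, k, 0;
     f, k, f, k, 0, 0, 0;
     f, 0, k, f, k, 0, 0;
     f, 0, 0, k, f, k, 0;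
     f, k, 0, 0, k, f, 0;
     0, 0, 0, 0, 0, 0, 0]

@[simp] lemma g6_cons_val_five {α : Type*} (x : α) (u : Fin 6 → α) :
    Matrix.vecCons x u 5 = u 4 := rfl

@[simp] lemma g6_cons_val_six {α : Type*} (x : α) (u : Fin 6 → α) :
    Matrix.vecCons x u 6 = u 5 := rfl

@[simp] lemma g6_cons_val_five' {α : Type*} (x : α) (u : Fin 5 → α) :
    Matrix.vecCons x u 5 = u 4 := rfl

lemma g6_quad (s x0 x1 x2 x3 x4 x5 : ℝ) (hs : s ^ 2 = 5) (h1 : 1 ≤ s) :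
    0 ≤ x0 ^ 2 + 2 * (s / 5) * x0 * (x1 + x2 + x3 + x4 + x5)
      + (s / 5) * (x1 ^ 2 + x2 ^ 2 + x3 ^ 2 + x4 ^ 2 + x5 ^ 2)
      + 2 * ((5 - s) / 10) * (x1 * x2 + x1 * x5 + x2 * x3 + x3 * x4 + x4 * x5) := by
  have key : x0 ^ 2 + 2 * (s / 5) * x0 * (x1 + x2 + x3 + x4 + x5)
      + (s / 5) * (x1 ^ 2 + x2 ^ 2 + x3 ^ 2 + x4 ^ 2 + x5 ^ 2)
      + 2 * ((5 - s) / 10) * (x1 * x2 + x1 * x5 + x2 * x3 + x3 * x4 + x4 * x5)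
      = (x0 + s / 5 * (x1 + x2 + x3 + x4 + x5)) ^ 2
        + (s - 1) / 5 * (x1 + (s - 1) / 4 * (x2 + x5) - (s + 1) / 4 * (x3 + x4)) ^ 2
        + s / 10 * (x2 + (s - 1) / 2 * (x3 - x4) - x5) ^ 2 := by
    linear_combination ((-1/400 : ℝ) * x5 ^ 2 + (-41/200) * x4 * x5 + (-1/400) * x4 ^ 2
      + (-1/200) * x3 * x5 + (-41/200) * x3 * x4 + (-1/400) * x3 ^ 2
      + (-1/200) * x2 * x5 + (-1/200) * x2 * x4 + (-41/200) * x2 * x3 + (-1/400) * x2 ^ 2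
      + (-9/50) * x1 * x5 + (1/50) * x1 * x4 + (1/50) * x1 * x3 + (-9/50) * x1 * x2
      + (-1/25) * x1 ^ 2
      + (-1/80) * s * x5 ^ 2 + (1/40) * s * x4 * x5 + (-3/80) * s * x4 ^ 2
      + (1/40) * s * x3 * x5 + (1/40) * s * x3 * x4 + (-3/80) * s * x3 ^ 2
      + (-1/40) * s * x2 * x5 + (1/40) * s * x2 * x4 + (1/40) * s * x2 * x3
      + (-1/80) * s * x2 ^ 2) * hs
  rw [key]
  have h0 : (0:ℝ) ≤ s := le_trans zero_le_one h1
  have h1' : (0:ℝ) ≤ s - 1 := by linarith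
  positivity

lemma g6Xalt_psd : g6Xalt.PosSemidef := by
  rw [Matrix.posSemidef_iff_dotProduct_mulVec]
  constructor
  · ext i j
    fin_cases i <;> fin_cases j <;>
      simp [g6Xalt, Matrix.conjTranspose_apply, Matrix.vecHead, Matrix.vecTail]
  · intro x
    have hs : Real.sqrt 5 ^ 2 = 5 := Real.sq_sqrt (by norm_num)
    have h1 : (1:ℝ) ≤ Real.sqrt 5 := by
      nlinarith [Real.sqrt_nonneg 5, hs]
    have h := g6_quad (Real.sqrt 5) (x 0) (x 1) (x 2) (x 3) (x 4) (x 5) hs h1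
    simp [dotProduct, Matrix.mulVec, Fin.sum_univ_seven, g6Xalt,
      Matrix.vecHead, Matrix.vecTail]
    ring_nf
    ring_nf at h
    linarith [h]

/-- The Lovász theta SDP of `G₆` has more than one optimal solution: there is a primal
feasible `X'` with objective value `∑_{i=1}^6 X'_{ii} = √5` and `X' ≠ X*`.  (Hence the
canonical non-contextuality inequality of `G₆` does not admit self-testing.) -/
theorem g6_optimal_solution_not_unique :
    ∃ X' : Matrix (Fin 7) (Fin 7) ℝ, g6PrimalFeasible X' ∧
      (∑ i : Fin 6, X' i.succ i.succ = Real.sqrt 5) ∧ X' ≠ g6Xstar := by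
  refine ⟨g6Xalt, ⟨g6Xalt_psd, ?_, ?_, ?_⟩, ?_, ?_⟩
  · simp [g6Xalt]
  · intro i hi
    fin_cases i <;> simp_all [g6Xalt]
  · intro i j hi hj hadj
    fin_cases i <;> fin_cases j <;>
      first
        | exact absurd rfl hi
        | exact absurd rfl hj
        | exact absurd hadj (by unfold g6Adj; decide)
        | simp [g6Xalt, Matrix.vecHead, Matrix.vecTail]
  · simp [Fin.sum_univ_six, g6Xalt, Matrix.vecHead, Matrix.vecTail]
    ring
  · intro h
    have h5 : (0:ℝ) < Real.sqrt 5 := Real.sqrt_pos.mpr (by norm_num)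
    have h66 := congrFun (congrFun h 6) 6
    have h5' : (0:ℝ) < (Real.sqrt 5)⁻¹ := inv_pos.mpr h5
    simp [g6Xalt, g6Xstar, Matrix.vecHead, Matrix.vecTail] at h66
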